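/- Let G be a graph on vertices v_1, ..., v_n, and let G' be the co-bipartite graph on V_1 ∪ V_2 where V_1 = {v_i^1} and V_2 = {v_i^2} are cliques, and v_i^1 is adjacent to v_j^2 if and only if v_j ∈ N_G[v_i]. Then for every positive integer k, γ_gr(G) ≥ k if and only if γ_gr(G') ≥ k. -/

import Mathlib

open Finset

variable {V : Type*}

/-- The closed neighborhood of a vertex. -/
def CN (G : SimpleGraph V) (v : V) : Set V := insert v (G.neighborSet v)

/-- A closed neighborhood (legal) sequence: distinct vertices, each footprinting
a vertex not dominated by the closed neighborhoods of earlier vertices. -/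
def IsCNSeq (G : SimpleGraph V) (S : List V) : Prop :=
  S.Nodup ∧ ∀ i : Fin S.length, ∃ u, u ∈ CN G (S.get i) ∧
    ∀ j : Fin S.length, j < i → u ∉ CN G (S.get j)

/-- A dominating sequence: a closed neighborhood sequence whose vertex set dominates. -/
def IsDomSeq (G : SimpleGraph V) (S : List V) : Prop :=
  IsCNSeq G S ∧ ∀ v : V, ∃ u ∈ S, v ∈ CN G u

/-- The Grundy domination number: the maximum length of a dominating sequence. -/
noncomputable def grundyDom (G : SimpleGraph V) : ℕ :=
  sSup {n | ∃ S : List V, IsDomSeq G S ∧ S.length = n}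

/-- The co-bipartite graph `G'` built from `G`: two clique copies `V₁, V₂` of `V(G)`,
with `vᵢ¹` adjacent to `vⱼ²` iff `vⱼ ∈ N_G[vᵢ]`. -/
def cobip (G : SimpleGraph V) : SimpleGraph (V ⊕ V) :=
  SimpleGraph.fromRel (fun u v =>
    match u, v with
    | Sum.inl _, Sum.inl _ => True
    | Sum.inr _, Sum.inr _ => True
    | Sum.inl i, Sum.inr j => i = j ∨ G.Adj i j
    | _, _ => False)

set_option linter.unnecessarySimpa false

lemma mem_CN {G : SimpleGraph V} {u v : V} : v ∈ CN G u ↔ v = u ∨ G.Adj u v := by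
  simp [CN, SimpleGraph.mem_neighborSet]

lemma self_mem_CN {G : SimpleGraph V} (u : V) : u ∈ CN G u := by simp [CN]

lemma cobip_adj_inl_inl {G : SimpleGraph V} {a b : V} :
    (cobip G).Adj (Sum.inl a) (Sum.inl b) ↔ a ≠ b := by
  simp [cobip, SimpleGraph.fromRel_adj]

lemma cobip_adj_inr_inr {G : SimpleGraph V} {a b : V} :
    (cobip G).Adj (Sum.inr a) (Sum.inr b) ↔ a ≠ b := by
  simp [cobip, SimpleGraph.fromRel_adj]

lemma cobip_adj_inl_inr {G : SimpleGraph V} {a b : V} :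
    (cobip G).Adj (Sum.inl a) (Sum.inr b) ↔ (a = b ∨ G.Adj a b) := by
  simp [cobip, SimpleGraph.fromRel_adj]

lemma mem_CN_cobip_inl_inl {G : SimpleGraph V} (a b : V) :
    Sum.inl a ∈ CN (cobip G) (Sum.inl b) := by
  rcases eq_or_ne a b with h | h
  · simp [h, self_mem_CN]
  · exact mem_CN.2 (Or.inr (cobip_adj_inl_inl.2 (Ne.symm h)))

lemma mem_CN_cobip_inr_inr {G : SimpleGraph V} (a b : V) :
    Sum.inr a ∈ CN (cobip G) (Sum.inr b) := by
  rcases eq_or_ne a b with h | h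
  · simp [h, self_mem_CN]
  · exact mem_CN.2 (Or.inr (cobip_adj_inr_inr.2 (Ne.symm h)))

lemma inr_mem_CN_cobip_inl {G : SimpleGraph V} {a b : V} :
    Sum.inr a ∈ CN (cobip G) (Sum.inl b) ↔ a ∈ CN G b := by
  rw [mem_CN, mem_CN]
  constructor
  · rintro (h | h)
    · exact absurd h (by simp)
    · rcases (cobip_adj_inl_inr.1 h) with h | h
      · exact Or.inl h.symm
      · exact Or.inr h
  · rintro (h | h)
    · exact Or.inr (cobip_adj_inl_inr.2 (Or.inl h.symm))
    · exact Or.inr (cobip_adj_inl_inr.2 (Or.inr h))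

lemma inl_mem_CN_cobip_inr {G : SimpleGraph V} {a b : V} :
    Sum.inl a ∈ CN (cobip G) (Sum.inr b) ↔ a ∈ CN G b := by
  rw [mem_CN, mem_CN]
  have hadj : (cobip G).Adj (Sum.inr b) (Sum.inl a) ↔ (a = b ∨ G.Adj a b) := by
    rw [(cobip G).adj_comm, cobip_adj_inl_inr]
  rw [hadj]
  constructor
  · rintro (h | h)
    · exact absurd h (by simp)
    · rcases h with h | h
      · exact Or.inl h
      · exact Or.inr (G.adj_comm .. |>.1 h)
  · rintro (h | h)
    · exact Or.inr (Or.inl h)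
    · exact Or.inr (Or.inr (G.adj_comm .. |>.1 h))


lemma isCNSeq_nil (G : SimpleGraph V) : IsCNSeq G [] :=
  ⟨List.nodup_nil, fun i => absurd i.isLt (by simp)⟩

lemma isCNSeq_append {G : SimpleGraph V} {S : List V} {v : V}
    (h : IsCNSeq G S) (hv : ∀ u ∈ S, v ∉ CN G u) : IsCNSeq G (S ++ [v]) := by
  obtain ⟨hnd, hleg⟩ := h
  have hvS : v ∉ S := fun hmem => hv v hmem (self_mem_CN v)
  constructor
  · rw [List.nodup_append]
    exact ⟨hnd, List.nodup_singleton v, by intro a ha b hb hab; simp at hb; subst hb; subst hab; exact hvS ha⟩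
  · intro i
    have hlen : (S ++ [v]).length = S.length + 1 := by simp
    rcases lt_or_ge i.val S.length with hi | hi
    · obtain ⟨u, hu1, hu2⟩ := hleg ⟨i.val, hi⟩
      refine ⟨u, ?_, ?_⟩
      · simpa [List.get_eq_getElem, List.getElem_append_left hi] using hu1
      · intro j hj
        have hjlt : j.val < S.length := lt_of_lt_of_le hj (le_of_lt hi)
        have := hu2 ⟨j.val, hjlt⟩ hj
        simpa [List.get_eq_getElem, List.getElem_append_left hjlt] using this
    · have hival : i.val = S.length := by omega
      refine ⟨v, ?_, ?_⟩
      · have : (S ++ [v]).get i = v := by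
          simp [List.get_eq_getElem, hival]
        rw [this]; exact self_mem_CN v
      · intro j hj
        have hjlt : j.val < S.length := by
          have := hj; rw [Fin.lt_def, hival] at this; exact this
        have : (S ++ [v]).get j = S.get ⟨j.val, hjlt⟩ := by
          simp [List.get_eq_getElem, List.getElem_append_left hjlt]
        rw [this]
        exact hv _ (List.get_mem S ⟨j.val, hjlt⟩)

lemma isCNSeq_of_append {G : SimpleGraph V} {S R : List V}
    (h : IsCNSeq G (S ++ R)) : IsCNSeq G S := by
  obtain ⟨hnd, hleg⟩ := h
  constructor
  · exact (List.nodup_append.1 hnd).1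
  · intro i
    have hi : i.val < (S ++ R).length := by simp; omega
    obtain ⟨u, hu1, hu2⟩ := hleg ⟨i.val, hi⟩
    refine ⟨u, ?_, ?_⟩
    · simpa [List.get_eq_getElem, List.getElem_append_left i.isLt] using hu1
    · intro j hj
      have hjl : j.val < (S ++ R).length := by simp; omega
      have := hu2 ⟨j.val, hjl⟩ hj
      simpa [List.get_eq_getElem, List.getElem_append_left j.isLt] using this

lemma exists_domSeq_of_isCNSeq [Fintype V] {G : SimpleGraph V} :
    ∀ n (S : List V), IsCNSeq G S → Fintype.card V - S.length ≤ n →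
      ∃ T, IsDomSeq G T ∧ S.length ≤ T.length := by
  intro n
  induction n with
  | zero =>
    intro S hS hle
    by_cases hdom : ∀ v : V, ∃ u ∈ S, v ∈ CN G u
    · exact ⟨S, ⟨hS, hdom⟩, le_refl _⟩
    · exfalso
      push_neg at hdom
      obtain ⟨v, hv⟩ := hdom
      have h' : IsCNSeq G (S ++ [v]) := isCNSeq_append hS hv
      have := h'.1.length_le_card
      simp at this
      omega
  | succ n ih =>
    intro S hS hle
    by_cases hdom : ∀ v : V, ∃ u ∈ S, v ∈ CN G u
    · exact ⟨S, ⟨hS, hdom⟩, le_refl _⟩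
    · push_neg at hdom
      obtain ⟨v, hv⟩ := hdom
      have h' : IsCNSeq G (S ++ [v]) := isCNSeq_append hS hv
      have hlen : (S ++ [v]).length = S.length + 1 := by simp
      obtain ⟨T, hT, hTlen⟩ := ih (S ++ [v]) h' (by
        have := h'.1.length_le_card
        omega)
      exact ⟨T, hT, by omega⟩
lemma CN_map_iso {G : SimpleGraph V} {H : SimpleGraph W} (e : G ≃g H) {u v : V} :
    e v ∈ CN H (e u) ↔ v ∈ CN G u := by
  rw [mem_CN, mem_CN, e.map_adj_iff, EmbeddingLike.apply_eq_iff_eq]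

lemma isDomSeq_map_iso {G : SimpleGraph V} {H : SimpleGraph W} (e : G ≃g H)
    {S : List V} (h : IsDomSeq G S) : IsDomSeq H (S.map e) := by
  obtain ⟨⟨hnd, hleg⟩, hdom⟩ := h
  refine ⟨⟨hnd.map (EmbeddingLike.injective e), ?_⟩, ?_⟩
  · intro i
    have hi : i.val < S.length := by simpa using i.isLt
    obtain ⟨u, hu1, hu2⟩ := hleg ⟨i.val, hi⟩
    refine ⟨e u, ?_, ?_⟩
    · simpa [List.get_eq_getElem, CN_map_iso e] using hu1
    · intro j hj
      have hjl : j.val < S.length := by simpa using j.isLt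
      have := hu2 ⟨j.val, hjl⟩ hj
      simpa [List.get_eq_getElem, CN_map_iso e] using this
  · intro w
    obtain ⟨u, huS, hu⟩ := hdom (e.symm w)
    refine ⟨e u, List.mem_map_of_mem huS, ?_⟩
    have := (CN_map_iso e (u := u) (v := e.symm w)).2 hu
    simpa using this

lemma cobip_adj_inr_inl {G : SimpleGraph V} {a b : V} :
    (cobip G).Adj (Sum.inr a) (Sum.inl b) ↔ (b = a ∨ G.Adj b a) := by
  rw [(cobip G).adj_comm, cobip_adj_inl_inr]

def swapIso (G : SimpleGraph V) : cobip G ≃g cobip G :=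
  ⟨Equiv.sumComm V V, by
    intro a b
    cases a <;> cases b <;>
      simp only [Equiv.sumComm_apply, Sum.swap_inl, Sum.swap_inr,
        cobip_adj_inl_inl, cobip_adj_inr_inr, cobip_adj_inl_inr, cobip_adj_inr_inl] <;>
      constructor <;> (rintro (h | h)) <;>
      first
        | exact Or.inl h.symm
        | exact Or.inr (G.adj_comm .. |>.1 h)⟩

lemma isDomSeq_map_inl {G : SimpleGraph V} {S : List V} (h : IsDomSeq G S) :
    IsDomSeq (cobip G) (S.map Sum.inl) := by
  obtain ⟨⟨hnd, hleg⟩, hdom⟩ := h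
  refine ⟨⟨hnd.map Sum.inl_injective, ?_⟩, ?_⟩
  · intro i
    have hi : i.val < S.length := by simpa using i.isLt
    rcases Nat.eq_zero_or_pos i.val with h0 | h0
    · refine ⟨Sum.inl (S.get ⟨i.val, hi⟩), ?_, ?_⟩
      · simp [List.get_eq_getElem, self_mem_CN]
      · intro j hj
        exact absurd hj (by rw [Fin.lt_def, h0]; omega)
    · obtain ⟨u, hu1, hu2⟩ := hleg ⟨i.val, hi⟩
      refine ⟨Sum.inr u, ?_, ?_⟩
      · simpa [List.get_eq_getElem, inr_mem_CN_cobip_inl] using hu1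
      · intro j hj
        have hjl : j.val < S.length := by simpa using j.isLt
        have := hu2 ⟨j.val, hjl⟩ hj
        simpa [List.get_eq_getElem, inr_mem_CN_cobip_inl] using this
  · intro w
    cases w with
    | inl x =>
      obtain ⟨u, huS, _⟩ := hdom x
      exact ⟨Sum.inl u, List.mem_map_of_mem huS, mem_CN_cobip_inl_inl x u⟩
    | inr x =>
      obtain ⟨u, huS, hu⟩ := hdom x
      exact ⟨Sum.inl u, List.mem_map_of_mem huS, inr_mem_CN_cobip_inl.2 hu⟩

lemma isCNSeq_of_map_inl {G : SimpleGraph V} {us : List V}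
    (h : IsCNSeq (cobip G) (us.map Sum.inl)) : IsCNSeq G us := by
  obtain ⟨hnd, hleg⟩ := h
  refine ⟨hnd.of_map, ?_⟩
  intro i
  rcases Nat.eq_zero_or_pos i.val with h0 | h0
  · exact ⟨us.get i, self_mem_CN _, fun j hj => absurd hj (by rw [Fin.lt_def, h0]; omega)⟩
  · have hi : i.val < (us.map (Sum.inl : V → V ⊕ V)).length := by simpa using i.isLt
    obtain ⟨w, hw1, hw2⟩ := hleg ⟨i.val, hi⟩
    have h0lt : (0 : ℕ) < (us.map (Sum.inl : V → V ⊕ V)).length := by omega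
    cases w with
    | inl x =>
      exfalso
      have := hw2 ⟨0, h0lt⟩ (by rwa [Fin.lt_def])
      apply this
      have : (us.map (Sum.inl : V → V ⊕ V)).get ⟨0, h0lt⟩ = Sum.inl (us.get ⟨0, by simpa using h0lt⟩) := by
        simp [List.get_eq_getElem]
      rw [this]
      exact mem_CN_cobip_inl_inl x _
    | inr y =>
      refine ⟨y, ?_, ?_⟩
      · have : (us.map (Sum.inl : V → V ⊕ V)).get ⟨i.val, hi⟩ = Sum.inl (us.get i) := by
          simp [List.get_eq_getElem]
        rw [this] at hw1
        exact inr_mem_CN_cobip_inl.1 hw1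
      · intro j hj
        have hjl : j.val < (us.map (Sum.inl : V → V ⊕ V)).length := by simpa using j.isLt
        have := hw2 ⟨j.val, hjl⟩ hj
        have hget : (us.map (Sum.inl : V → V ⊕ V)).get ⟨j.val, hjl⟩ = Sum.inl (us.get j) := by
          simp [List.get_eq_getElem]
        rw [hget] at this
        exact fun hmem => this (inr_mem_CN_cobip_inl.2 hmem)

lemma isDomSeq_of_map_inl {G : SimpleGraph V} {us : List V}
    (h : IsDomSeq (cobip G) (us.map Sum.inl)) : IsDomSeq G us := by
  refine ⟨isCNSeq_of_map_inl h.1, ?_⟩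
  intro v
  obtain ⟨w, hwS, hw⟩ := h.2 (Sum.inr v)
  obtain ⟨u, huS, rfl⟩ := List.mem_map.1 hwS
  exact ⟨u, huS, inr_mem_CN_cobip_inl.1 hw⟩

lemma mixed_case {G : SimpleGraph V} {us : List V} {v : V} (hus : us ≠ [])
    (h : IsCNSeq (cobip G) (us.map Sum.inl ++ [Sum.inr v])) :
    ∃ y, IsCNSeq G (us ++ [y]) := by
  have h1 : IsCNSeq G us := isCNSeq_of_map_inl (isCNSeq_of_append h)
  obtain ⟨hnd, hleg⟩ := h
  have hm : us.length < (us.map Sum.inl ++ [Sum.inr v]).length := by simp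
  obtain ⟨w, hw1, hw2⟩ := hleg ⟨us.length, hm⟩
  have h0lt : (0 : ℕ) < (us.map Sum.inl ++ [Sum.inr v]).length := by simp
  have huslen : 0 < us.length := List.length_pos_iff.2 hus
  cases w with
  | inl x =>
    exfalso
    have := hw2 ⟨0, h0lt⟩ (by rw [Fin.lt_def]; exact huslen)
    apply this
    have hg : (us.map Sum.inl ++ [Sum.inr v]).get ⟨0, h0lt⟩
        = Sum.inl (us.get ⟨0, huslen⟩) := by
      simp [List.get_eq_getElem, List.getElem_append_left (by simpa using huslen : (0:ℕ) < (us.map (Sum.inl : V → V ⊕ V)).length)]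
    rw [hg]
    exact mem_CN_cobip_inl_inl x _
  | inr y =>
    refine ⟨y, isCNSeq_append h1 ?_⟩
    intro u huS hmem
    obtain ⟨j, hjl, hju⟩ := List.getElem_of_mem huS
    have hjl' : j < (us.map Sum.inl ++ [Sum.inr v]).length := by simp; omega
    have := hw2 ⟨j, hjl'⟩ (by rw [Fin.lt_def]; exact hjl)
    apply this
    have hg : (us.map Sum.inl ++ [Sum.inr v]).get ⟨j, hjl'⟩ = Sum.inl u := by
      simp [List.get_eq_getElem, List.getElem_append_left (by simpa using hjl : j < (us.map (Sum.inl : V → V ⊕ V)).length), hju]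
    rw [hg]
    exact inr_mem_CN_cobip_inl.2 hmem

lemma le_grundyDom_iff [Fintype V] (G : SimpleGraph V) (k : ℕ) :
    k ≤ grundyDom G ↔ ∃ S : List V, IsDomSeq G S ∧ k ≤ S.length := by
  have hbdd : BddAbove {n | ∃ S : List V, IsDomSeq G S ∧ S.length = n} := ⟨Fintype.card V, by
    rintro n ⟨S, hS, rfl⟩; exact hS.1.1.length_le_card⟩
  have hne : {n | ∃ S : List V, IsDomSeq G S ∧ S.length = n}.Nonempty := by
    obtain ⟨T, hT, _⟩ := exists_domSeq_of_isCNSeq (Fintype.card V) ([] : List V)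
      (isCNSeq_nil G) (Nat.sub_le _ _)
    exact ⟨T.length, T, hT, rfl⟩
  constructor
  · intro h
    obtain ⟨S, hS, hlen⟩ := Nat.sSup_mem hne hbdd
    exact ⟨S, hS, by rw [grundyDom] at h; omega⟩
  · rintro ⟨S, hS, hk⟩
    exact le_trans hk (le_csSup hbdd ⟨S, hS, rfl⟩)

lemma main_aux [Fintype V] {G : SimpleGraph V} {T : List (V ⊕ V)}
    (hT : IsDomSeq (cobip G) T) (hpos : 0 < T.length)
    (h0 : ∃ u₀, T[0]'hpos = Sum.inl u₀) :
    ∃ S : List V, IsDomSeq G S ∧ T.length ≤ S.length := by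
  classical
  by_cases hall : ∀ i (hi : i < T.length), ∃ x, T[i] = Sum.inl x
  · set us := T.map (Sum.elim id id) with husdef
    have hTe : T = us.map Sum.inl := by
      apply List.ext_getElem (by simp [husdef])
      intro i h1 h2
      obtain ⟨x, hx⟩ := hall i h1
      simp [husdef, hx]
    rw [hTe] at hT
    exact ⟨us, isDomSeq_of_map_inl hT, by simp [husdef]⟩
  · push_neg at hall
    obtain ⟨i, hi, hinl⟩ := hall
    obtain ⟨v, hv⟩ : ∃ v, T[i] = Sum.inr v := by
      cases hTi : T[i] with
      | inl x => exact absurd hTi (hinl x)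
      | inr y => exact ⟨y, rfl⟩
    obtain ⟨u₀, hu₀⟩ := h0
    have key : ∀ j (hj : j < T.length) y, T[j] = Sum.inr y → j = T.length - 1 := by
      intro j hj y hy
      by_contra hne
      have hj1 : j + 1 < T.length := by omega
      obtain ⟨w, hw1, hw2⟩ := hT.1.2 ⟨j + 1, hj1⟩
      cases w with
      | inl x =>
        refine hw2 ⟨0, hpos⟩ (by rw [Fin.lt_def]; simp) ?_
        rw [List.get_eq_getElem]
        exact hu₀ ▸ mem_CN_cobip_inl_inl x u₀
      | inr z =>
        refine hw2 ⟨j, hj⟩ (by rw [Fin.lt_def]; simp) ?_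
        rw [List.get_eq_getElem]
        exact hy ▸ mem_CN_cobip_inr_inr z y
    have hlast : i = T.length - 1 := key i hi v hv
    have hT2 : 2 ≤ T.length := by
      by_contra hlt
      have hi0 : i = 0 := by omega
      subst hi0
      exact absurd (hu₀.symm.trans hv) (by simp)
    set m := T.length - 1 with hmdef
    have hprev : ∀ j (hj : j < m), ∃ x, T[j]'(by omega) = Sum.inl x := by
      intro j hj
      cases hTj : T[j]'(by omega) with
      | inl x => exact ⟨x, rfl⟩
      | inr y => exact absurd (key j (by omega) y hTj) (by omega)
    set us := (T.take m).map (Sum.elim id id) with husdef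
    have huslen : us.length = m := by simp [husdef]; omega
    have hTe : T = us.map Sum.inl ++ [Sum.inr v] := by
      apply List.ext_getElem (by simp [husdef]; omega)
      intro j h1 h2
      rcases lt_or_ge j m with hjm | hjm
      · obtain ⟨x, hx⟩ := hprev j hjm
        rw [List.getElem_append_left (by simpa [huslen] using hjm)]
        simp only [husdef, List.getElem_map, List.getElem_take]
        rw [hx]
        simp
      · have hji : j = i := by simp [husdef] at h2; omega
        have hrhs : (us.map (Sum.inl : V → V ⊕ V) ++ [Sum.inr v])[j]'h2 = Sum.inr v :=
          List.getElem_concat_length (by simp [huslen]; omega) _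
        rw [hrhs]
        subst hji
        exact hv
    have husne : us ≠ [] := by
      rw [← List.length_pos_iff, huslen]; omega
    rw [hTe] at hT
    obtain ⟨y, hy⟩ := mixed_case husne hT.1
    obtain ⟨S, hS, hlen⟩ := exists_domSeq_of_isCNSeq (Fintype.card V) _ hy (Nat.sub_le _ _)
    refine ⟨S, hS, ?_⟩
    have : (us ++ [y]).length = m + 1 := by simp [huslen]
    omega

/-- For every positive integer `k`, `γ_gr(G) ≥ k` iff `γ_gr(G') ≥ k`. -/
theorem grundyDom_iff_grundyDom_cobip {V : Type*} [Fintype V] [DecidableEq V]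
    (G : SimpleGraph V) (k : ℕ) (hk : 0 < k) :
    k ≤ grundyDom G ↔ k ≤ grundyDom (cobip G) := by
  classical
  constructor
  · intro h
    obtain ⟨S, hS, hkS⟩ := (le_grundyDom_iff G k).1 h
    exact (le_grundyDom_iff (cobip G) k).2
      ⟨S.map Sum.inl, isDomSeq_map_inl hS, by simpa using hkS⟩
  · intro h
    obtain ⟨T, hT, hk'⟩ := (le_grundyDom_iff (cobip G) k).1 h
    have hpos : 0 < T.length := by omega
    rw [le_grundyDom_iff]
    cases hT0 : T[0]'hpos with
    | inl u₀ =>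
      obtain ⟨S, hS, hlen⟩ := main_aux hT hpos ⟨u₀, hT0⟩
      exact ⟨S, hS, by omega⟩
    | inr v₀ =>
      have hT' : IsDomSeq (cobip G) (T.map (swapIso G)) := isDomSeq_map_iso (swapIso G) hT
      have hpos' : 0 < (T.map (swapIso G)).length := by simpa using hpos
      have h0' : (T.map ⇑(swapIso G))[0]'hpos' = Sum.inl v₀ := by
        simp [hT0, swapIso]
      obtain ⟨S, hS, hlen⟩ := main_aux hT' hpos' ⟨v₀, h0'⟩
      refine ⟨S, hS, ?_⟩
      simp only [List.length_map] at hlen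
      omega
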